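/- Let (B,<) be a well-ordered (or merely linearly ordered and well-founded) set satisfying: (i) for every b ∈ B, |{b' : b' < b}| < |B|, and (ii) for every b ∈ B with infinitely many predecessors, there exists b' ≤ b with |{x : x < b'}| = |{x : x < b}| and b' cardinal-like. Then for every b ∈ B and every cardinal λ < |{x : x < b}|, there exists c < b such that λ ≤ |{x : x < c}| < |{x : x < b}|. -/

import Mathlib

universe u

open Cardinal

/-- Let `(B,<)` be a well-founded linear order such that
(i) every `b` satisfies `|b↓| < |B|`, and (ii) every `b` with infinitely many predecessors
admits `b' ≤ b` with `|b'↓| = |b↓|` and `b'` cardinal-like. Then for every `b` and every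
cardinal `lam < |b↓|` there is `c < b` with `lam ≤ |c↓| < |b↓|`. -/
theorem exists_pred_card_between {B : Type u} [LinearOrder B] [WellFoundedLT B]
    (h1 : ∀ b : B, #(Set.Iio b) < #B)
    (h2 : ∀ b : B, (Set.Iio b).Infinite →
      ∃ b' ≤ b, #(Set.Iio b') = #(Set.Iio b) ∧
        ∀ c < b', #(Set.Iio c) < #(Set.Iio b')) :
    ∀ (b : B) (lam : Cardinal.{u}), lam < #(Set.Iio b) →
      ∃ c < b, lam ≤ #(Set.Iio c) ∧ #(Set.Iio c) < #(Set.Iio b) := by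
  intro b lam hlam
  by_cases hinf : (Set.Iio b).Infinite
  · -- infinite case
    obtain ⟨b', hb'le, hcard, hcl⟩ := h2 b hinf
    -- claim: ∃ c < b', lam ≤ #(Iio c)
    have hlam' : lam < #(Set.Iio b') := by rwa [hcard]
    -- order type of Iio b'
    let r : Set.Iio b' → Set.Iio b' → Prop := fun x y => (x : B) < (y : B)
    haveI : IsWellOrder (Set.Iio b') r := (inferInstance : IsWellOrder (Set.Iio b') (· < ·))
    have hord : lam.ord < Ordinal.type r := by
      by_contra h
      push_neg at h
      have := Ordinal.card_le_card h
      rw [Cardinal.card_ord] at this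
      simp only [Ordinal.card_type] at this
      exact absurd this (not_le.2 hlam')
    obtain ⟨a, ha⟩ := Ordinal.typein_surj r hord
    -- #{y // r y a} = lam
    have hk : #{ y // r y a } = lam := by
      rw [← Ordinal.card_typein, ha, Cardinal.card_ord]
    -- equiv with Iio a.val
    have he : #(Set.Iio (a.1 : B)) = lam := by
      rw [← hk]
      apply Cardinal.mk_congr
      exact {
        toFun := fun y => ⟨⟨y.1, lt_trans y.2 a.2⟩, y.2⟩
        invFun := fun x => ⟨x.1.1, x.2⟩
        left_inv := fun x => rfl
        right_inv := fun y => rfl }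
    refine ⟨a.1, lt_of_lt_of_le a.2 hb'le, le_of_eq he.symm, ?_⟩
    rw [← hcard]
    exact hcl a.1 a.2
  · -- finite case
    have hfin : (Set.Iio b).Finite := Set.not_infinite.mp hinf
    have hne : (Set.Iio b).Nonempty := by
      rcases Set.eq_empty_or_nonempty (Set.Iio b) with h | h
      · rw [h] at hlam; simp at hlam
      · exact h
    obtain ⟨c, hcmem, hcmax⟩ : ∃ c ∈ Set.Iio b, ∀ x ∈ Set.Iio b, id c ≤ id x → id c = id x := by
      obtain ⟨c, hc1, hc2⟩ := Set.Finite.exists_maximalFor id _ hfin hne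
      exact ⟨c, hc1, fun x hx h => le_antisymm h (hc2 hx h)⟩
    simp only [id] at hcmax
    have hcb : c < b := hcmem
    have hsub : Set.Iio c ⊆ Set.Iio b := fun x hx => lt_trans hx hcb
    have hiob : Set.Iio b ⊆ insert c (Set.Iio c) := by
      intro x hx
      rcases lt_trichotomy x c with h | h | h
      · exact Set.mem_insert_of_mem _ h
      · exact h ▸ Set.mem_insert _ _
      · exact absurd (hcmax x hx (le_of_lt h)) (ne_of_lt h)
    -- #Iio b ≤ #Iio c + 1
    have h1' : #(Set.Iio b) ≤ #(Set.Iio c) + 1 :=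
      le_trans (Cardinal.mk_le_mk_of_subset hiob) Cardinal.mk_insert_le
    have hfinc : (Set.Iio c).Finite := hfin.subset hsub
    obtain ⟨m, rfl⟩ := Cardinal.lt_aleph0.1 (hlam.trans (hfin.lt_aleph0))
    obtain ⟨k, hk⟩ := Cardinal.lt_aleph0.1 hfinc.lt_aleph0
    have hle : (m : Cardinal) ≤ #(Set.Iio c) := by
      rw [hk] at h1' ⊢
      have : (m : Cardinal) < (k : Cardinal) + 1 := lt_of_lt_of_le hlam h1'
      rw [← Nat.cast_one, ← Nat.cast_add, Nat.cast_lt] at this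
      exact_mod_cast Nat.lt_succ_iff.mp this
    have hlt : #(Set.Iio c) < #(Set.Iio b) := by
      have hins : Set.insert c (Set.Iio c) ⊆ Set.Iio b := by
        intro x hx
        rcases hx with rfl | hx
        · exact hcb
        · exact hsub hx
      have h2' : #(Set.Iio c) + 1 ≤ #(Set.Iio b) := by
        rw [← Cardinal.mk_insert (show c ∉ Set.Iio c from lt_irrefl c)]
        exact Cardinal.mk_le_mk_of_subset hins
      refine lt_of_lt_of_le ?_ h2'
      rw [hk, ← Nat.cast_one, ← Nat.cast_add, Nat.cast_lt]
      exact Nat.lt_succ_self k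
    exact ⟨c, hcb, hle, hlt⟩
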